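/- Let K ⊆ ℕ be the halting set and let H be the fuzzy set defined by H(x) = 1 if x ∈ K and H(x) = 1/2 otherwise. Then H is fuzzy c.e., and moreover, for every Σ⁰₁-approximation h of H with h(x,0) = 0 for all x, the set {x ∈ ℕ : |{s : h(x,s+1) ≠ h(x,s)}| ≥ 2} is infinite. -/

import Mathlib

open Filter

/-- The Σ-mind-change function of a sequence of rationals: starts at `1`,
flips to `-1` on a strict decrease while in increasing mode, and flips back
to `1` on a strict increase while in decreasing mode. -/
def mSigma (g : ℕ → ℚ) : ℕ → ℤ
  | 0 => 1
  | s + 1 =>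
      if mSigma g s = 1 then (if g s ≤ g (s + 1) then 1 else -1)
      else (if g (s + 1) ≤ g s then -1 else 1)

/-- A fuzzy set: a function `ℕ → ℝ` with values in `[0,1]`. -/
def IsFuzzySet (A : ℕ → ℝ) : Prop := ∀ x, 0 ≤ A x ∧ A x ≤ 1

/-- `f` is a Σ⁰₁-approximation of the fuzzy set `A`. -/
def SigmaApprox (f : ℕ → ℕ → ℚ) (A : ℕ → ℝ) : Prop :=
  Computable₂ f ∧ (∀ x s, 0 ≤ f x s ∧ f x s ≤ 1) ∧
    (∀ x s, f x s ≤ f x (s + 1)) ∧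
    (∀ x, Tendsto (fun s => (f x s : ℝ)) atTop (nhds (A x)))

/-- A fuzzy set is computably enumerable if it has a Σ⁰₁-approximation. -/
def FuzzyCE (A : ℕ → ℝ) : Prop := ∃ f : ℕ → ℕ → ℚ, SigmaApprox f A

/-- `f` is a Δ⁰₂-approximation of the fuzzy set `A`. -/
def DeltaApprox (f : ℕ → ℕ → ℚ) (A : ℕ → ℝ) : Prop :=
  Computable₂ f ∧ (∀ x s, 0 ≤ f x s ∧ f x s ≤ 1) ∧
    (∀ x, Tendsto (fun s => (f x s : ℝ)) atTop (nhds (A x)))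

/-- A fuzzy set `A` is `n`-c.e. if it has a Δ⁰₂-approximation which starts at `0`
and changes monotonicity at most `n - 1` times. -/
def FuzzyNCE (n : ℕ) (A : ℕ → ℝ) : Prop :=
  ∃ f : ℕ → ℕ → ℚ, DeltaApprox f A ∧ (∀ x, f x 0 = 0) ∧
    (∀ x, {s | mSigma (f x) (s + 1) ≠ mSigma (f x) s}.Finite ∧
      {s | mSigma (f x) (s + 1) ≠ mSigma (f x) s}.ncard ≤ n - 1)

section AuxHark

open Nat.Partrec (Code)
open Nat.Partrec.Code

private lemma diag_re : REPred fun x : ℕ => ((Denumerable.ofNat Code x).eval x).Dom :=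
  (eval_part.comp (Computable.ofNat Code) Computable.id).dom_re

private lemma diag_not_computable :
    ¬ ComputablePred fun x : ℕ => ((Denumerable.ofNat Code x).eval x).Dom := by
  intro h
  have hre := h.not.to_re
  have hg : Computable₂ (fun (_ : ℕ) (_ : Unit) => (0 : ℕ)) := (Computable.const 0).to₂
  have hp : Partrec fun a : ℕ =>
      (Part.assert (¬ ((Denumerable.ofNat Code a).eval a).Dom) fun _ => Part.some ()).map
        (fun _ : Unit => (0 : ℕ)) := hre.map hg
  obtain ⟨c, hc⟩ := exists_code.1 (Partrec.nat_iff.1 hp)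
  set e := Encodable.encode c with he
  have hoe : (Denumerable.ofNat Code e) = c := Denumerable.ofNat_encode c
  have h1 : c.eval e =
      (Part.assert (¬ ((Denumerable.ofNat Code e).eval e).Dom) fun _ => Part.some ()).map
        (fun _ : Unit => (0 : ℕ)) := congrFun hc e
  by_cases hd : (c.eval e).Dom
  · have hd2 := hd
    rw [h1] at hd2
    obtain ⟨y, hy⟩ := Part.dom_iff_mem.1 hd2
    obtain ⟨a, ha, -⟩ := (Part.mem_map_iff _).1 hy
    obtain ⟨hnd, -⟩ := Part.mem_assert_iff.1 ha
    exact hnd (by rw [hoe]; exact hd)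
  · apply hd
    rw [h1]
    exact Part.dom_iff_mem.2
      ⟨0, (Part.mem_map_iff _).2
        ⟨(), Part.mem_assert_iff.2 ⟨by rw [hoe]; exact hd, Part.mem_some _⟩, rfl⟩⟩

private lemma primrec_mem_list (l : List ℕ) : PrimrecPred fun x : ℕ => x ∈ l := by
  induction l with
  | nil =>
      exact Primrec.primrecPred ((Primrec.const false).of_eq fun n => by simp)
  | cons a l ih =>
      refine (((Primrec.eq.comp Primrec.id (Primrec.const a)).or ih).of_eq ?_)
      intro x; simp [List.mem_cons]

private lemma computable_mem_finset (F : Finset ℕ) :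
    Computable fun x : ℕ => decide (x ∈ F) := by
  classical
  have : PrimrecPred fun x : ℕ => x ∈ F :=
    (primrec_mem_list F.toList).of_eq fun x => Finset.mem_toList
  exact (this.decide.to_comp).of_eq fun x => by simp

private lemma approx_struct (g : ℕ → ℚ) (L : ℝ) (h0 : g 0 = 0)
    (hlim : Tendsto (fun s => (g s : ℝ)) atTop (nhds L))
    (hsub : ¬ ({s | g (s + 1) ≠ g s}.Nontrivial)) (hL : L ≠ 0) :
    ∃ t, (∀ s, g s = 0 ∨ g s = g t) ∧ (g t : ℝ) = L := by
  rw [Set.not_nontrivial_iff] at hsub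
  rcases hsub.eq_empty_or_singleton with hemp | ⟨s₀, hsing⟩
  · exfalso
    have hall : ∀ s, g s = 0 := by
      intro s; induction s with
      | zero => exact h0
      | succ n ih =>
          have hn : g (n + 1) = g n := by
            by_contra hne
            exact absurd (show n ∈ {s | g (s + 1) ≠ g s} from hne) (by simp [hemp])
          rw [hn, ih]
    have h2 : Tendsto (fun s => (g s : ℝ)) atTop (nhds 0) := by
      have : (fun s => (g s : ℝ)) = fun _ => (0 : ℝ) := funext fun s => by rw [hall s]; norm_num
      rw [this]; exact tendsto_const_nhds
    exact hL (tendsto_nhds_unique hlim h2)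
  · have key : ∀ s, s ∉ {s | g (s + 1) ≠ g s} → g (s + 1) = g s := fun s hs => not_not.1 hs
    have ha : ∀ s, s ≤ s₀ → g s = 0 := by
      intro s; induction s with
      | zero => intro _; exact h0
      | succ n ih =>
          intro hle
          have hn : n ∉ {s | g (s + 1) ≠ g s} := by rw [hsing, Set.mem_singleton_iff]; omega
          rw [key n hn, ih (by omega)]
    have hb : ∀ k, g (s₀ + 1 + k) = g (s₀ + 1) := by
      intro k; induction k with
      | zero => rfl
      | succ n ih =>
          have hn : (s₀ + 1 + n) ∉ {s | g (s + 1) ≠ g s} := by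
            rw [hsing, Set.mem_singleton_iff]; omega
          rw [show s₀ + 1 + (n + 1) = (s₀ + 1 + n) + 1 by omega, key _ hn, ih]
    have hb' : ∀ s, s₀ < s → g s = g (s₀ + 1) := by
      intro s hs
      obtain ⟨k, rfl⟩ : ∃ k, s = s₀ + 1 + k := ⟨s - (s₀ + 1), by omega⟩
      exact hb k
    refine ⟨s₀ + 1, fun s => ?_, ?_⟩
    · rcases le_or_gt s s₀ with hle | hgt
      · exact Or.inl (ha s hle)
      · exact Or.inr (hb' s hgt)
    · have h2 : Tendsto (fun s => (g s : ℝ)) atTop (nhds ((g (s₀ + 1) : ℝ))) := by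
        apply Tendsto.congr' _ tendsto_const_nhds
        filter_upwards [eventually_ge_atTop (s₀ + 1)] with s hs
        exact_mod_cast (congrArg (fun q : ℚ => (q : ℝ)) (hb' s (by omega))).symm
      exact tendsto_nhds_unique h2 hlim

end AuxHark

open Classical in
/-- Harkleroad's example: the fuzzy set `H` with `H x = 1` if the `x`-th partial
computable function halts on input `x`, and `H x = 1/2` otherwise, is fuzzy c.e.,
but every Σ⁰₁-approximation of `H` starting at `0` needs at least two updates on
infinitely many inputs. -/
theorem harkleroad_example :
    FuzzyCE (fun x => if ((Denumerable.ofNat Nat.Partrec.Code x).eval x).Dom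
        then (1 : ℝ) else 1 / 2) ∧
    ∀ h : ℕ → ℕ → ℚ,
      SigmaApprox h (fun x => if ((Denumerable.ofNat Nat.Partrec.Code x).eval x).Dom
        then (1 : ℝ) else 1 / 2) →
      (∀ x, h x 0 = 0) →
      {x | {s | h x (s + 1) ≠ h x s}.Nontrivial}.Infinite := by
  classical
  constructor
  · -- fuzzy c.e.
    refine ⟨fun x s =>
      cond ((Nat.Partrec.Code.evaln s (Denumerable.ofNat Nat.Partrec.Code x) x).isSome)
        1 (1/2 : ℚ), ?_, ?_, ?_, ?_⟩
    · have hp : Primrec fun p : ℕ × ℕ =>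
          (Nat.Partrec.Code.evaln p.2 (Denumerable.ofNat Nat.Partrec.Code p.1) p.1).isSome :=
        Primrec.option_isSome.comp (Nat.Partrec.Code.primrec_evaln.comp
          ((Primrec.snd.pair ((Primrec.ofNat Nat.Partrec.Code).comp Primrec.fst)).pair Primrec.fst))
      exact ((hp.cond (Primrec.const 1) (Primrec.const (1/2))).to_comp).to₂
    · intro x s
      show (0 : ℚ) ≤ cond
            ((Nat.Partrec.Code.evaln s (Denumerable.ofNat Nat.Partrec.Code x) x).isSome) 1 (1/2) ∧
          cond ((Nat.Partrec.Code.evaln s (Denumerable.ofNat Nat.Partrec.Code x) x).isSome)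
            1 (1/2) ≤ 1
      cases (Nat.Partrec.Code.evaln s (Denumerable.ofNat Nat.Partrec.Code x) x).isSome <;>
        · simp only [Bool.cond_false, Bool.cond_true]
          norm_num
    · intro x s
      show cond ((Nat.Partrec.Code.evaln s (Denumerable.ofNat Nat.Partrec.Code x) x).isSome)
            1 (1/2 : ℚ) ≤
          cond ((Nat.Partrec.Code.evaln (s + 1) (Denumerable.ofNat Nat.Partrec.Code x) x).isSome)
            1 (1/2)
      cases hs : (Nat.Partrec.Code.evaln s (Denumerable.ofNat Nat.Partrec.Code x) x).isSome with
      | true =>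
          obtain ⟨v, hv⟩ := Option.isSome_iff_exists.1 hs
          have hv' : (Nat.Partrec.Code.evaln (s + 1)
              (Denumerable.ofNat Nat.Partrec.Code x) x) = some v :=
            Nat.Partrec.Code.evaln_mono (Nat.le_succ s) hv
          rw [hv']
          simp only [Option.isSome_some, Bool.cond_true]
          norm_num
      | false =>
          simp only [Bool.cond_false]
          cases (Nat.Partrec.Code.evaln (s + 1) (Denumerable.ofNat Nat.Partrec.Code x) x).isSome <;>
            · simp only [Bool.cond_false, Bool.cond_true]
              norm_num
    · intro x
      by_cases hx : ((Denumerable.ofNat Nat.Partrec.Code x).eval x).Dom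
      · show Tendsto _ atTop
          (nhds (if ((Denumerable.ofNat Nat.Partrec.Code x).eval x).Dom then (1 : ℝ) else 1/2))
        rw [if_pos hx]
        obtain ⟨v, hv⟩ := Part.dom_iff_mem.1 hx
        obtain ⟨k, hk⟩ := Nat.Partrec.Code.evaln_complete.1 hv
        apply Tendsto.congr' _ tendsto_const_nhds
        filter_upwards [eventually_ge_atTop k] with s hs
        have hm : v ∈ Nat.Partrec.Code.evaln s (Denumerable.ofNat Nat.Partrec.Code x) x :=
          Nat.Partrec.Code.evaln_mono hs hk
        have hsome : (Nat.Partrec.Code.evaln s (Denumerable.ofNat Nat.Partrec.Code x) x).isSome :=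
          Option.isSome_iff_exists.2 ⟨v, hm⟩
        show (1 : ℝ) = ((cond
          ((Nat.Partrec.Code.evaln s (Denumerable.ofNat Nat.Partrec.Code x) x).isSome)
          1 (1/2 : ℚ) : ℚ) : ℝ)
        rw [hsome]
        norm_num
      · show Tendsto _ atTop
          (nhds (if ((Denumerable.ofNat Nat.Partrec.Code x).eval x).Dom then (1 : ℝ) else 1/2))
        rw [if_neg hx]
        have hnone : ∀ s,
            (Nat.Partrec.Code.evaln s (Denumerable.ofNat Nat.Partrec.Code x) x).isSome = false := by
          intro s
          by_contra hcon
          obtain ⟨v, hv⟩ := Option.isSome_iff_exists.1 (Bool.not_eq_false _ ▸ hcon)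
          exact hx (Part.dom_iff_mem.2 ⟨v, Nat.Partrec.Code.evaln_complete.2 ⟨s, hv⟩⟩)
        have heq : (fun s => ((cond ((Nat.Partrec.Code.evaln s
            (Denumerable.ofNat Nat.Partrec.Code x) x).isSome) 1 (1/2 : ℚ) : ℚ) : ℝ))
            = fun _ => (1/2 : ℝ) := by
          funext s; rw [hnone s]; norm_num
        rw [heq]
        exact tendsto_const_nhds
  · -- part 2
    intro h hap h0
    obtain ⟨hcomp, hbd, hmono, hlim⟩ := hap
    by_contra hinf
    rw [Set.not_infinite] at hinf
    -- per-x characterization outside S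
    have key1 : ∀ x, x ∉ {x | {s | h x (s + 1) ≠ h x s}.Nontrivial} →
        (¬ ((Denumerable.ofNat Nat.Partrec.Code x).eval x).Dom ↔ ∃ s, h x s = 1/2) := by
      intro x hx
      have hL : (if ((Denumerable.ofNat Nat.Partrec.Code x).eval x).Dom
          then (1 : ℝ) else 1/2) ≠ 0 := by
        by_cases hd : ((Denumerable.ofNat Nat.Partrec.Code x).eval x).Dom
        · rw [if_pos hd]; norm_num
        · rw [if_neg hd]; norm_num
      obtain ⟨t, hv, hLt0⟩ := approx_struct (h x) _ (h0 x) (hlim x) hx hL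
      have hLt : (h x t : ℝ) =
          (if ((Denumerable.ofNat Nat.Partrec.Code x).eval x).Dom then (1 : ℝ) else 1/2) := hLt0
      constructor
      · intro hnd
        rw [if_neg hnd] at hLt
        refine ⟨t, Rat.cast_injective (α := ℝ) ?_⟩
        rw [hLt]; norm_num
      · rintro ⟨s, hs⟩ hd
        rw [if_pos hd] at hLt
        have ht : h x t = 1 := Rat.cast_injective (α := ℝ) (by rw [hLt]; norm_num)
        rcases hv s with h' | h'
        · rw [hs] at h'; norm_num at h'
        · rw [hs, ht] at h'; norm_num at h'
    -- finite sets
    set S := {x | {s | h x (s + 1) ≠ h x s}.Nontrivial} with hS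
    have hfin2 : (S ∩ {x | ¬ ((Denumerable.ofNat Nat.Partrec.Code x).eval x).Dom}).Finite :=
      hinf.inter_of_left _
    set F1 : Finset ℕ := hfin2.toFinset with hF1
    set F2 : Finset ℕ := hinf.toFinset with hF2
    set b : ℕ → ℕ → Bool := fun x s =>
      decide (x ∈ F1) || (!(decide (x ∈ F2)) && decide (h x s = 1/2)) with hbdef
    have hbcomp : Computable₂ b := by
      have c1 : Computable fun p : ℕ × ℕ => decide (p.1 ∈ F1) :=
        (computable_mem_finset F1).comp Computable.fst
      have c2 : Computable fun p : ℕ × ℕ => decide (p.1 ∈ F2) :=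
        (computable_mem_finset F2).comp Computable.fst
      have ch : Computable fun p : ℕ × ℕ => h p.1 p.2 := hcomp
      have c3 : Computable fun p : ℕ × ℕ => decide (h p.1 p.2 = 1/2) :=
        (Primrec.eq.decide.to_comp).comp ch (Computable.const (1/2 : ℚ))
      have c4 : Computable fun p : ℕ × ℕ => (!(decide (p.1 ∈ F2)) && decide (h p.1 p.2 = 1/2)) :=
        (Primrec.and.to_comp).comp ((Primrec.not.to_comp).comp c2) c3
      exact ((Primrec.or.to_comp).comp c1 c4).to₂
    have hr : Partrec fun x : ℕ => Nat.rfind (fun s => Part.some (b x s)) := by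
      have := Partrec.rfind (hbcomp.partrec₂)
      exact this
    have hdom : ∀ x, (Nat.rfind (fun s => Part.some (b x s))).Dom ↔ ∃ n, b x n = true := by
      intro x
      refine (Nat.rfind_dom (p := fun s => Part.some (b x s))).trans ?_
      constructor
      · rintro ⟨n, hn, -⟩; exact ⟨n, (Part.mem_some_iff.1 hn).symm⟩
      · rintro ⟨n, hn⟩; exact ⟨n, Part.mem_some_iff.2 hn.symm, fun {m} _ => trivial⟩
    have hiff : ∀ x, (∃ n, b x n = true) ↔
        ¬ ((Denumerable.ofNat Nat.Partrec.Code x).eval x).Dom := by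
      intro x
      have hbtrue : ∀ n, b x n = true ↔
          (x ∈ F1 ∨ (x ∉ F2 ∧ h x n = 1/2)) := by
        intro n
        simp [hbdef]
      constructor
      · rintro ⟨n, hn⟩
        rcases (hbtrue n).1 hn with hmem | ⟨hnmem, hval⟩
        · have := (Set.Finite.mem_toFinset hfin2).1 hmem
          exact this.2
        · have hxS : x ∉ S := fun hxS => hnmem ((Set.Finite.mem_toFinset hinf).2 hxS)
          exact (key1 x hxS).2 ⟨n, hval⟩
      · intro hnd
        by_cases hxS : x ∈ S
        · exact ⟨0, (hbtrue 0).2 (Or.inl ((Set.Finite.mem_toFinset hfin2).2 ⟨hxS, hnd⟩))⟩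
        · obtain ⟨s, hs⟩ := (key1 x hxS).1 hnd
          exact ⟨s, (hbtrue s).2 (Or.inr ⟨fun hm => hxS ((Set.Finite.mem_toFinset hinf).1 hm), hs⟩)⟩
    have hre2 : REPred fun x : ℕ => ¬ ((Denumerable.ofNat Nat.Partrec.Code x).eval x).Dom :=
      (hr.dom_re).of_eq fun x => (hdom x).trans (hiff x)
    exact diag_not_computable
      (ComputablePred.computable_iff_re_compl_re'.2 ⟨diag_re, hre2⟩)
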